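/- arXiv:1604.03547 — 6 statements merged into one kernel-verified Lean document; each statement's English description precedes it below -/
import Mathlib

section
/- Let B be a separable Banach space, (x_n) a dense sequence in B, and (f_n) functionals in B* with f_n(x_n) = ‖x_n‖² and ‖f_n‖ = ‖x_n‖ (duality mappings). With t_n = 1/(‖f_n‖² · 2ⁿ), the map ⟨u,v⟩ = Σ_{n=1}^∞ t_n f_n(u) · conj(f_n(v)) defines an inner product on B (i.e., it is a positive definite sesquilinear form). -/
open scoped BigOperators

/-- the weighted sum of duality functionals defines an inner product
(symmetric, bilinear, positive definite form) on a separable Banach space. -/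
theorem kuelbs_inner_product
    (B : Type*) [NormedAddCommGroup B] [NormedSpace ℝ B] [CompleteSpace B]
    [TopologicalSpace.SeparableSpace B]
    (x : ℕ → B) (hxdense : DenseRange x) (hxne : ∀ n, x n ≠ 0)
    (f : ℕ → B →L[ℝ] ℝ)
    (hdual : ∀ n, f n (x n) = ‖x n‖ ^ 2)
    (hnorm : ∀ n, ‖f n‖ = ‖x n‖)
    (t : ℕ → ℝ) (ht : ∀ n, t n = 1 / (‖f n‖ ^ 2 * 2 ^ (n + 1)))
    (Φ : B → B → ℝ) (hΦ : ∀ u v, Φ u v = ∑' n, t n * (f n u) * (f n v)) :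
    (∀ u v, Φ u v = Φ v u) ∧
    (∀ u v w, Φ (u + v) w = Φ u w + Φ v w) ∧
    (∀ (a : ℝ) (u v : B), Φ (a • u) v = a * Φ u v) ∧
    (∀ u, 0 ≤ Φ u u) ∧
    (∀ u, Φ u u = 0 → u = 0) := by
  have hfpos : ∀ n, 0 < ‖f n‖ := by
    intro n; rw [hnorm]; exact norm_pos_iff.mpr (hxne n)
  have htpos : ∀ n, 0 < t n := by
    intro n; rw [ht n]
    have := hfpos n
    positivity
  -- summability
  have key : ∀ u v : B, Summable (fun n => t n * (f n u) * (f n v)) := by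
    intro u v
    apply Summable.of_norm
    have hgsum : Summable (fun n : ℕ => ‖u‖ * ‖v‖ * (1/2 : ℝ) ^ n) :=
      (summable_geometric_two).mul_left _
    refine Summable.of_nonneg_of_le (fun n => norm_nonneg _) ?_ hgsum
    intro n
    have h1 : |f n u| ≤ ‖f n‖ * ‖u‖ := (f n).le_opNorm u
    have h2 : |f n v| ≤ ‖f n‖ * ‖v‖ := (f n).le_opNorm v
    have ht' : t n = 1 / (‖f n‖ ^ 2 * 2 ^ (n + 1)) := ht n
    have hfn := hfpos n
    rw [Real.norm_eq_abs, abs_mul, abs_mul, abs_of_pos (htpos n), ht']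
    have h2n : (0:ℝ) < 2 ^ (n+1) := by positivity
    rw [div_mul_eq_mul_div, div_mul_eq_mul_div, div_le_iff₀ (by positivity)]
    have : |f n u| * |f n v| ≤ (‖f n‖ * ‖u‖) * (‖f n‖ * ‖v‖) :=
      mul_le_mul h1 h2 (abs_nonneg _) (by positivity)
    have hpow : ((1:ℝ)/2)^n * 2^(n+1) = 2 := by
      rw [div_pow, one_pow, pow_succ]
      field_simp
    nlinarith [this, hpow, mul_nonneg (mul_nonneg (norm_nonneg u) (norm_nonneg v)) (sq_nonneg ‖f n‖), abs_nonneg (f n u), abs_nonneg (f n v)]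
  refine ⟨?_, ?_, ?_, ?_, ?_⟩
  · intro u v; rw [hΦ, hΦ]
    congr 1; ext n; ring
  · intro u v w
    rw [hΦ, hΦ, hΦ, ← Summable.tsum_add (key u w) (key v w)]
    congr 1; ext n; rw [map_add]; ring
  · intro a u v
    rw [hΦ, hΦ, ← tsum_mul_left]
    congr 1; ext n; rw [map_smul]; simp; ring
  · intro u
    rw [hΦ]
    apply tsum_nonneg
    intro n
    have : t n * (f n u) * (f n u) = t n * (f n u)^2 := by ring
    rw [this]
    exact mul_nonneg (le_of_lt (htpos n)) (sq_nonneg _)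
  · intro u hu
    rw [hΦ u u] at hu
    have hzero : ∀ n, f n u = 0 := by
      intro n
      have hle := Summable.le_tsum (key u u) n (fun m _ => by
        have : t m * (f m u) * (f m u) = t m * (f m u)^2 := by ring
        rw [this]; exact mul_nonneg (le_of_lt (htpos m)) (sq_nonneg _))
      rw [hu] at hle
      have heq : t n * (f n u) * (f n u) = 0 := le_antisymm hle (by
        have : t n * (f n u) * (f n u) = t n * (f n u)^2 := by ring
        rw [this]; exact mul_nonneg (le_of_lt (htpos n)) (sq_nonneg _))
      have : (f n u)^2 = 0 := by
        by_contra h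
        have : t n * (f n u)^2 ≠ 0 := mul_ne_zero (ne_of_gt (htpos n)) h
        apply this; rw [← heq]; ring
      exact pow_eq_zero_iff (n := 2) (by norm_num) |>.mp this
    by_contra hune
    have hupos : 0 < ‖u‖ := norm_pos_iff.mpr hune
    obtain ⟨n, hn⟩ := Metric.denseRange_iff.mp hxdense u (‖u‖ / 3) (by positivity)
    rw [dist_comm, dist_eq_norm] at hn
    have hxnorm : ‖x n‖ ≤ ‖x n - u‖ := by
      have h1 : ‖x n‖ ^ 2 = f n (x n - u) := by
        rw [map_sub, hzero n, sub_zero, hdual n]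
      have h2 : f n (x n - u) ≤ ‖f n‖ * ‖x n - u‖ :=
        le_trans (le_abs_self _) ((f n).le_opNorm _)
      rw [hnorm n] at h2
      have hxp : 0 < ‖x n‖ := norm_pos_iff.mpr (hxne n)
      nlinarith [h1, h2]
    have h4 : ‖u‖ ≤ ‖u - x n‖ + ‖x n‖ := by
      have he : u = (u - x n) + x n := by abel
      calc ‖u‖ = ‖(u - x n) + x n‖ := by rw [← he]
        _ ≤ ‖u - x n‖ + ‖x n‖ := norm_add_le _ _
    have h3 : ‖u - x n‖ = ‖x n - u‖ := norm_sub_rev _ _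
    linarith
end

section
/- Every infinite-dimensional separable Banach space B admits a continuous dense embedding into a separable Hilbert space H₂ (i.e., there exist a separable Hilbert space H₂ and an injective bounded linear map j : B → H₂ with dense range). -/
open TopologicalSpace ENNReal

/-- Kuelbs: every infinite-dimensional separable Banach space embeds
continuously, injectively and densely into a separable Hilbert space. -/
theorem kuelbs_embedding
    (B : Type*) [NormedAddCommGroup B] [NormedSpace ℝ B] [CompleteSpace B]
    [TopologicalSpace.SeparableSpace B]
    (hinf : ¬ FiniteDimensional ℝ B) :
    ∃ (H : Type) (nG : NormedAddCommGroup H) (iP : @InnerProductSpace ℝ H _ nG.toSeminormedAddCommGroup),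
      CompleteSpace H ∧ TopologicalSpace.SeparableSpace H ∧
      ∃ j : B →L[ℝ] H, Function.Injective j ∧ DenseRange j := by
  have hNT : Nontrivial B := by
    by_contra h
    rw [not_nontrivial_iff_subsingleton] at h
    exact hinf (Module.Finite.of_finite)
  -- dense sequence and norming functionals
  obtain ⟨u, hu⟩ := TopologicalSpace.exists_dense_seq B
  choose f hf1 hf2 using fun n => exists_dual_vector' ℝ (u n)
  -- the functionals separate points
  have hsep : ∀ x : B, (∀ n, f n x = 0) → x = 0 := by
    intro x hx
    by_contra hx0
    have hpos : 0 < ‖x‖ := norm_pos_iff.mpr hx0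
    obtain ⟨n, hn⟩ := Metric.denseRange_iff.mp hu x (‖x‖ / 3) (by positivity)
    have h1 : ‖u n‖ ≤ ‖x‖ / 3 := by
      have hle := (f n).le_opNorm (u n - x)
      rw [map_sub, hx n, sub_zero, hf1 n, one_mul] at hle
      have heq : ‖(f n) (u n)‖ = ‖u n‖ := by
        rw [hf2 n]; simp
      rw [heq] at hle
      calc ‖u n‖ ≤ ‖u n - x‖ := hle
        _ = dist x (u n) := by rw [dist_eq_norm, norm_sub_rev]
        _ ≤ ‖x‖ / 3 := hn.le
    have h2 : ‖x‖ ≤ ‖u n‖ + ‖x - u n‖ := norm_le_insert' _ _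
    have h3 : ‖x - u n‖ ≤ ‖x‖ / 3 := by
      rw [← dist_eq_norm]; exact hn.le
    linarith
  -- basic pointwise bound
  have hbd : ∀ (x : B) (n : ℕ),
      ‖((1:ℝ)/2) ^ n * f n x‖ ^ 2 ≤ ‖x‖ ^ 2 * ((1:ℝ)/4) ^ n := by
    intro x n
    have hb : ‖f n x‖ ≤ ‖x‖ := by
      have := (f n).le_opNorm x; rwa [hf1 n, one_mul] at this
    have h1 : ‖((1:ℝ)/2) ^ n * f n x‖ ≤ ((1:ℝ)/2) ^ n * ‖x‖ := by
      rw [norm_mul, Real.norm_of_nonneg (show (0:ℝ) ≤ ((1:ℝ)/2) ^ n by positivity)]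
      exact mul_le_mul_of_nonneg_left hb (by positivity)
    calc ‖((1:ℝ)/2) ^ n * f n x‖ ^ 2 ≤ (((1:ℝ)/2) ^ n * ‖x‖) ^ 2 :=
          pow_le_pow_left₀ (norm_nonneg _) h1 2
      _ = ‖x‖ ^ 2 * ((1:ℝ)/4) ^ n := by
          rw [mul_pow, mul_comm, ← pow_mul, mul_comm n 2, pow_mul]
          norm_num
  have hgeo : ∀ x : B, Summable (fun n : ℕ => ‖x‖ ^ 2 * ((1:ℝ)/4) ^ n) := fun x =>
    (summable_geometric_of_lt_one (by norm_num) (by norm_num)).mul_left _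
  -- square summability
  have hmem : ∀ x : B, Memℓp (fun n => ((1:ℝ)/2) ^ n * f n x) 2 := by
    intro x
    apply memℓp_gen
    simp only [ENNReal.toReal_ofNat, Real.rpow_two]
    exact Summable.of_nonneg_of_le (fun n => by positivity) (hbd x) (hgeo x)
  -- the linear map into ℓ²
  let F : B →ₗ[ℝ] lp (fun _ : ℕ => ℝ) 2 :=
    { toFun := fun x => ⟨fun n => ((1:ℝ)/2) ^ n * f n x, hmem x⟩
      map_add' := fun x y => by
        apply Subtype.ext
        funext n
        show ((1:ℝ)/2) ^ n * f n (x + y)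
            = ((1:ℝ)/2) ^ n * f n x + ((1:ℝ)/2) ^ n * f n y
        rw [map_add]; ring
      map_smul' := fun c x => by
        apply Subtype.ext
        funext n
        show ((1:ℝ)/2) ^ n * f n (c • x) = c • (((1:ℝ)/2) ^ n * f n x)
        rw [map_smul, smul_eq_mul, smul_eq_mul]; ring }
  have hFcoe : ∀ (x : B) (n : ℕ), (F x : ∀ _ : ℕ, ℝ) n = ((1:ℝ)/2) ^ n * f n x :=
    fun x n => rfl
  have hp2 : (0 : ℝ) < (2 : ℝ≥0∞).toReal := by norm_num
  have hFbound : ∀ x : B, ‖F x‖ ≤ 2 * ‖x‖ := by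
    intro x
    apply lp.norm_le_of_tsum_le hp2 (by positivity)
    simp only [ENNReal.toReal_ofNat, Real.rpow_two]
    have hle : ∀ n : ℕ, ‖(F x : ∀ _ : ℕ, ℝ) n‖ ^ 2 ≤ ‖x‖ ^ 2 * ((1:ℝ)/4) ^ n := by
      intro n; rw [hFcoe]; exact hbd x n
    have hsummable : Summable (fun n : ℕ => ‖(F x : ∀ _ : ℕ, ℝ) n‖ ^ 2) :=
      Summable.of_nonneg_of_le (fun n => by positivity) hle (hgeo x)
    calc ∑' n : ℕ, ‖(F x : ∀ _ : ℕ, ℝ) n‖ ^ 2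
        ≤ ∑' n : ℕ, ‖x‖ ^ 2 * ((1:ℝ)/4) ^ n := Summable.tsum_le_tsum hle hsummable (hgeo x)
      _ = ‖x‖ ^ 2 * ((4:ℝ)/3) := by
          rw [tsum_mul_left, tsum_geometric_of_lt_one (by norm_num) (by norm_num)]
          norm_num
      _ ≤ (2 * ‖x‖) ^ 2 := by nlinarith [norm_nonneg x]
  let j₀ : B →L[ℝ] lp (fun _ : ℕ => ℝ) 2 := F.mkContinuous 2 hFbound
  have hj₀coe : ∀ (x : B) (n : ℕ), (j₀ x : ∀ _ : ℕ, ℝ) n = ((1:ℝ)/2) ^ n * f n x :=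
    fun x n => rfl
  -- injectivity of j₀
  have hj₀inj : ∀ x : B, j₀ x = 0 → x = 0 := by
    intro x hx
    apply hsep
    intro n
    have h0 : (j₀ x : ∀ _ : ℕ, ℝ) n = 0 := by rw [hx]; rfl
    rw [hj₀coe] at h0
    have hne : ((1:ℝ)/2) ^ n ≠ 0 := by positivity
    exact (mul_eq_zero.mp h0).resolve_left hne
  -- the closed subspace generated by the range
  let K : Submodule ℝ (lp (fun _ : ℕ => ℝ) 2) :=
    (LinearMap.range (j₀ : B →ₗ[ℝ] lp (fun _ : ℕ => ℝ) 2)).topologicalClosure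
  have hKclosed : IsClosed (K : Set (lp (fun _ : ℕ => ℝ) 2)) :=
    Submodule.isClosed_topologicalClosure _
  haveI : CompleteSpace K := hKclosed.completeSpace_coe
  let j : B →L[ℝ] K := j₀.codRestrict K
    (fun x => Submodule.le_topologicalClosure _ (LinearMap.mem_range_self _ x))
  have hjinj : Function.Injective j := by
    intro x y hxy
    have h0 : j₀ (x - y) = 0 := by
      rw [map_sub, sub_eq_zero]
      exact congrArg Subtype.val hxy
    exact sub_eq_zero.mp (hj₀inj _ h0)
  have hKcoe : (K : Set (lp (fun _ : ℕ => ℝ) 2)) = closure (Set.range (⇑j₀)) := by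
    rw [Submodule.topologicalClosure_coe]
    congr 1
  have hjdense : DenseRange j := by
    intro y
    rw [closure_subtype]
    have himg : (Subtype.val '' Set.range ⇑j) = Set.range ⇑j₀ := by
      ext z
      constructor
      · rintro ⟨w, ⟨x, rfl⟩, rfl⟩; exact ⟨x, rfl⟩
      · rintro ⟨x, rfl⟩; exact ⟨j x, ⟨x, rfl⟩, rfl⟩
    rw [himg, ← hKcoe]
    exact y.2
  exact ⟨K, inferInstance, inferInstance, inferInstance,
    hjdense.separableSpace j.continuous, j, hjinj, hjdense⟩
end

section
/- (Lax's theorem) Let B be a Banach space continuously and densely embedded in a Hilbert space H, and let A : B → B be a bounded linear operator that is symmetric with respect to the H-inner product, i.e., (Ax, y)_H = (x, Ay)_H for all x, y ∈ B. Then A extends to a bounded operator on H with ‖A‖_{L(H)} ≤ ‖A‖_{L(B)}. -/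
/-- Powers of a symmetric operator are symmetric. -/
lemma lax_sym_pow
    (B : Type*) [NormedAddCommGroup B] [NormedSpace ℝ B]
    (H : Type*) [NormedAddCommGroup H] [InnerProductSpace ℝ H]
    (j : B →L[ℝ] H) (A : B →L[ℝ] B)
    (hsym : ∀ x y : B, (inner ℝ (j (A x)) (j y) : ℝ) = (inner ℝ (j x) (j (A y)) : ℝ)) :
    ∀ (k : ℕ) (x y : B), (inner ℝ (j ((A ^ k) x)) (j y) : ℝ) = (inner ℝ (j x) (j ((A ^ k) y)) : ℝ) := by
  intro k
  induction k with
  | zero => intro x y; simp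
  | succ n ih =>
    intro x y
    have h1 : (A ^ (n + 1)) x = (A ^ n) (A x) := by
      rw [pow_succ, ContinuousLinearMap.mul_apply]
    have h2 : (A ^ (n + 1)) y = A ((A ^ n) y) := by
      rw [pow_succ', ContinuousLinearMap.mul_apply]
    rw [h1, ih (A x) y, hsym, h2]

/-- The key norm inequality `‖j (A x)‖ ≤ ‖A‖ * ‖j x‖`. -/
lemma lax_key
    (B : Type*) [NormedAddCommGroup B] [NormedSpace ℝ B]
    (H : Type*) [NormedAddCommGroup H] [InnerProductSpace ℝ H]
    (j : B →L[ℝ] H) (hj : Function.Injective j) (A : B →L[ℝ] B)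
    (hsym : ∀ x y : B, (inner ℝ (j (A x)) (j y) : ℝ) = (inner ℝ (j x) (j (A y)) : ℝ)) :
    ∀ x : B, ‖j (A x)‖ ≤ ‖A‖ * ‖j x‖ := by
  have hsp := lax_sym_pow B H j A hsym
  -- squaring step
  have hsq : ∀ (k : ℕ) (x : B), ‖j ((A ^ k) x)‖ ^ 2 ≤ ‖j x‖ * ‖j ((A ^ (2 * k)) x)‖ := by
    intro k x
    have h1 : ‖j ((A ^ k) x)‖ ^ 2 = (inner ℝ (j ((A ^ k) x)) (j ((A ^ k) x)) : ℝ) := by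
      rw [real_inner_self_eq_norm_sq]
    have h2 : (A ^ k) ((A ^ k) x) = (A ^ (2 * k)) x := by
      rw [two_mul, pow_add, ContinuousLinearMap.mul_apply]
    calc ‖j ((A ^ k) x)‖ ^ 2 = (inner ℝ (j x) (j ((A ^ k) ((A ^ k) x))) : ℝ) := by
          rw [h1, hsp]
      _ ≤ ‖j x‖ * ‖j ((A ^ k) ((A ^ k) x))‖ := real_inner_le_norm _ _
      _ = ‖j x‖ * ‖j ((A ^ (2 * k)) x)‖ := by rw [h2]
  -- iterated inequality
  have hiter : ∀ (n : ℕ) (x : B),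
      ‖j (A x)‖ ^ (2 ^ n) ≤ ‖j x‖ ^ (2 ^ n - 1) * ‖j ((A ^ (2 ^ n)) x)‖ := by
    intro n
    induction n with
    | zero => intro x; simp
    | succ n ih =>
      intro x
      have hpos : (0:ℝ) ≤ ‖j (A x)‖ ^ (2 ^ n) := by positivity
      have h1 : ‖j (A x)‖ ^ (2 ^ (n + 1)) = (‖j (A x)‖ ^ (2 ^ n)) ^ 2 := by
        rw [← pow_mul, pow_succ]
      have h2 : (‖j (A x)‖ ^ (2 ^ n)) ^ 2 ≤ (‖j x‖ ^ (2 ^ n - 1) * ‖j ((A ^ (2 ^ n)) x)‖) ^ 2 :=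
        pow_le_pow_left₀ hpos (ih x) 2
      have h3 : (‖j x‖ ^ (2 ^ n - 1) * ‖j ((A ^ (2 ^ n)) x)‖) ^ 2
          = ‖j x‖ ^ (2 * (2 ^ n - 1)) * ‖j ((A ^ (2 ^ n)) x)‖ ^ 2 := by
        rw [mul_pow, ← pow_mul, mul_comm (2 ^ n - 1) 2]
      have h4 : ‖j x‖ ^ (2 * (2 ^ n - 1)) * ‖j ((A ^ (2 ^ n)) x)‖ ^ 2
          ≤ ‖j x‖ ^ (2 * (2 ^ n - 1)) * (‖j x‖ * ‖j ((A ^ (2 * 2 ^ n)) x)‖) := by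
        apply mul_le_mul_of_nonneg_left (hsq (2 ^ n) x) (by positivity)
      have hexp : 2 * (2 ^ n - 1) + 1 = 2 ^ (n + 1) - 1 := by
        have h : 1 ≤ 2 ^ n := Nat.one_le_two_pow
        omega
      have h5 : ‖j x‖ ^ (2 * (2 ^ n - 1)) * (‖j x‖ * ‖j ((A ^ (2 * 2 ^ n)) x)‖)
          = ‖j x‖ ^ (2 ^ (n + 1) - 1) * ‖j ((A ^ (2 ^ (n + 1))) x)‖ := by
        rw [← hexp, pow_succ' (2:ℕ) n, pow_add, pow_one]; ring
      calc ‖j (A x)‖ ^ (2 ^ (n + 1)) = (‖j (A x)‖ ^ (2 ^ n)) ^ 2 := h1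
        _ ≤ _ := h2
        _ = _ := h3
        _ ≤ _ := h4
        _ = _ := h5
  intro x
  by_contra hcon
  push_neg at hcon
  set a := ‖j (A x)‖ with ha
  set b := ‖j x‖ with hb
  -- b > 0
  have hb0 : 0 < b := by
    rcases (norm_nonneg (j x)).lt_or_eq with h | h
    · exact h
    · exfalso
      have hjx : j x = 0 := norm_eq_zero.mp h.symm
      have hx0 : x = 0 := hj (by rw [hjx, map_zero])
      have ha0 : a = 0 := by rw [ha, hx0]; simp
      have hb' : b = 0 := by rw [hb, ← h]
      rw [hb', mul_zero, ha0] at hcon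
      exact lt_irrefl 0 hcon
  have hA0 : 0 < ‖A‖ := by
    rcases (norm_nonneg A).lt_or_eq with h | h
    · exact h
    · exfalso
      have hA : A = 0 := by rwa [eq_comm, norm_eq_zero] at h
      have ha0 : a = 0 := by
        rw [ha, show A x = 0 by rw [hA]; rfl]; simp
      rw [← h, zero_mul, ha0] at hcon
      exact lt_irrefl 0 hcon
  set t := a / (‖A‖ * b) with ht
  have ht1 : 1 < t := by
    rw [ht, lt_div_iff₀ (by positivity)]
    linarith
  set C := ‖j‖ * ‖x‖ with hC
  have hbound : ∀ n : ℕ, t ^ (2 ^ n) ≤ C / b := by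
    intro n
    have h1 : ‖j ((A ^ (2 ^ n)) x)‖ ≤ ‖A‖ ^ (2 ^ n) * C := by
      calc ‖j ((A ^ (2 ^ n)) x)‖ ≤ ‖j‖ * ‖(A ^ (2 ^ n)) x‖ := j.le_opNorm _
        _ ≤ ‖j‖ * (‖A ^ (2 ^ n)‖ * ‖x‖) :=
          mul_le_mul_of_nonneg_left ((A ^ (2 ^ n)).le_opNorm x) (norm_nonneg j)
        _ ≤ ‖j‖ * (‖A‖ ^ (2 ^ n) * ‖x‖) := by
          apply mul_le_mul_of_nonneg_left _ (norm_nonneg j)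
          exact mul_le_mul_of_nonneg_right (norm_pow_le' A (Nat.pos_of_ne_zero (by positivity)))
            (norm_nonneg x)
        _ = ‖A‖ ^ (2 ^ n) * C := by rw [hC]; ring
    have h2 : a ^ (2 ^ n) ≤ b ^ (2 ^ n - 1) * (‖A‖ ^ (2 ^ n) * C) := by
      calc a ^ (2 ^ n) ≤ b ^ (2 ^ n - 1) * ‖j ((A ^ (2 ^ n)) x)‖ := hiter n x
        _ ≤ b ^ (2 ^ n - 1) * (‖A‖ ^ (2 ^ n) * C) :=
          mul_le_mul_of_nonneg_left h1 (by positivity)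
    have hbpow : b ^ (2 ^ n - 1) * b = b ^ (2 ^ n) := by
      rw [← pow_succ]
      congr 1
      have : 1 ≤ 2 ^ n := Nat.one_le_two_pow
      omega
    rw [ht, div_pow, div_le_div_iff₀ (by positivity) hb0, mul_pow]
    calc a ^ (2 ^ n) * b ≤ b ^ (2 ^ n - 1) * (‖A‖ ^ (2 ^ n) * C) * b := by
          exact mul_le_mul_of_nonneg_right h2 hb0.le
      _ = C * (‖A‖ ^ (2 ^ n) * b ^ (2 ^ n)) := by
          rw [mul_comm (b ^ (2 ^ n - 1)) (‖A‖ ^ (2 ^ n) * C), mul_assoc, hbpow]; ring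
  obtain ⟨n, hn⟩ := pow_unbounded_of_one_lt (C / b) ht1
  have h3 : t ^ n ≤ t ^ (2 ^ n) := pow_le_pow_right₀ ht1.le (Nat.lt_two_pow_self (n := n)).le
  have := hbound n
  linarith

/-- Lax's theorem: a bounded operator on B that is symmetric with
respect to the inner product of an ambient Hilbert space H (in which B embeds
continuously and densely) extends to a bounded operator on H with
‖Ā‖_{L(H)} ≤ ‖A‖_{L(B)}. -/
theorem lax_theorem
    (B : Type*) [NormedAddCommGroup B] [NormedSpace ℝ B] [CompleteSpace B]
    (H : Type*) [NormedAddCommGroup H] [InnerProductSpace ℝ H] [CompleteSpace H]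
    (j : B →L[ℝ] H) (hj : Function.Injective j) (hd : DenseRange j)
    (A : B →L[ℝ] B)
    (hsym : ∀ x y : B, (inner ℝ (j (A x)) (j y) : ℝ) = (inner ℝ (j x) (j (A y)) : ℝ)) :
    ∃ Abar : H →L[ℝ] H, (∀ x : B, Abar (j x) = j (A x)) ∧ ‖Abar‖ ≤ ‖A‖ := by
  have hkey := lax_key B H j hj A hsym
  -- the range of j as a submodule
  set S : Submodule ℝ H := LinearMap.range (j : B →ₗ[ℝ] H) with hS
  have hjlin : Function.Injective (j : B →ₗ[ℝ] H) := hj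
  let e : B ≃ₗ[ℝ] S := LinearEquiv.ofInjective (j : B →ₗ[ℝ] H) hjlin
  have he : ∀ x : B, ((e x : S) : H) = j x := fun x => rfl
  -- the linear map on S
  let T₀ : S →ₗ[ℝ] H := (j : B →ₗ[ℝ] H) ∘ₗ (A : B →ₗ[ℝ] B) ∘ₗ (e.symm : S →ₗ[ℝ] B)
  have hT₀ : ∀ s : S, ‖T₀ s‖ ≤ ‖A‖ * ‖s‖ := by
    intro s
    obtain ⟨x, hx⟩ : ∃ x : B, e x = s := ⟨e.symm s, e.apply_symm_apply s⟩
    have h1 : T₀ s = j (A x) := by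
      simp only [T₀, LinearMap.comp_apply, ← hx, LinearEquiv.coe_coe, e.symm_apply_apply,
        ContinuousLinearMap.coe_coe]
    have h2 : ‖(s : H)‖ = ‖j x‖ := by rw [← hx, he]
    rw [h1]
    calc ‖j (A x)‖ ≤ ‖A‖ * ‖j x‖ := hkey x
      _ = ‖A‖ * ‖s‖ := by rw [← h2]; rfl
  let T : S →L[ℝ] H := T₀.mkContinuous ‖A‖ hT₀
  -- the inclusion S →L H
  let ι : S →L[ℝ] H := S.subtypeL
  have hui : IsUniformInducing ι := isometry_subtype_coe.isUniformInducing
  have hdi : DenseRange ι := by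
    have : Dense (S : Set H) := by
      have : (S : Set H) = Set.range j := by
        ext y
        simp [hS, LinearMap.mem_range]
      rw [this]
      exact hd
    exact this.denseRange_val
  refine ⟨T.extend ι, ?_, ?_⟩
  · intro x
    have hm : j x ∈ S := ⟨x, rfl⟩
    have h1 : ι ⟨j x, hm⟩ = j x := rfl
    have h2 : T ⟨j x, hm⟩ = j (A x) := by
      have : (⟨j x, hm⟩ : S) = e x := rfl
      rw [this]
      show T₀ (e x) = j (A x)
      simp only [T₀, LinearMap.comp_apply, LinearEquiv.coe_coe, e.symm_apply_apply,
        ContinuousLinearMap.coe_coe]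
    rw [← h1, ContinuousLinearMap.extend_eq T hdi hui, h2]
  · have hN : ∀ s : S, ‖s‖ ≤ (1 : NNReal) * ‖ι s‖ := by
      intro s
      rw [NNReal.coe_one, one_mul]
      exact le_of_eq rfl
    have h := ContinuousLinearMap.opNorm_extend_le T hdi hN
    have hTle : ‖T‖ ≤ ‖A‖ := T₀.mkContinuous_norm_le (norm_nonneg A) hT₀
    have hEq : T.extend ι =
        T.extend ι := rfl
    rw [hEq]
    calc _ ≤ (1 : NNReal) * ‖T‖ := h
      _ = ‖T‖ := by simp
      _ ≤ ‖A‖ := hTle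
end

section
/- Let H be a Hilbert space, B a Banach space densely continuously embedded in H, and A : B → B bounded and H-symmetric on B. Then for every x ∈ B and every n ≥ 1, ‖Ax‖_H^{2ⁿ} ≤ ‖A^{2ⁿ} x‖_H · ‖x‖_H^{2ⁿ - 1} (the key iterated Cauchy–Schwarz inequality in Lax's proof; in particular for ‖x‖_H = 1, ‖Ax‖_H^{2ⁿ} ≤ ‖A^{2ⁿ}x‖_H). -/
/-- the iterated Cauchy–Schwarz inequality in Lax's proof:
‖Ax‖_H^(2^n) ≤ ‖A^(2^n) x‖_H · ‖x‖_H^(2^n − 1). -/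
theorem lax_iterated_cauchy_schwarz
    (B : Type*) [NormedAddCommGroup B] [NormedSpace ℝ B] [CompleteSpace B]
    (H : Type*) [NormedAddCommGroup H] [InnerProductSpace ℝ H] [CompleteSpace H]
    (j : B →L[ℝ] H) (hj : Function.Injective j) (hd : DenseRange j)
    (A : B →L[ℝ] B)
    (hsym : ∀ x y : B, (inner ℝ (j (A x)) (j y) : ℝ) = (inner ℝ (j x) (j (A y)) : ℝ)) :
    ∀ (x : B) (n : ℕ), 1 ≤ n →
      ‖j (A x)‖ ^ (2 ^ n) ≤ ‖j ((A ^ (2 ^ n)) x)‖ * ‖j x‖ ^ (2 ^ n - 1) := by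
  -- symmetry for powers
  have hpow : ∀ (k : ℕ) (x y : B),
      (inner ℝ (j ((A ^ k) x)) (j y) : ℝ) = (inner ℝ (j x) (j ((A ^ k) y)) : ℝ) := by
    intro k
    induction k with
    | zero => intro x y; simp
    | succ k ih =>
      intro x y
      have h1 : (A ^ (k + 1)) x = (A ^ k) (A x) := by
        rw [pow_succ]; rfl
      have h2 : (A ^ (k + 1)) y = A ((A ^ k) y) := by
        rw [pow_succ']; rfl
      rw [h1, h2, ih (A x) y, ← hsym x ((A ^ k) y)]
  -- key squared bound
  have key : ∀ (k : ℕ) (x : B),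
      ‖j ((A ^ k) x)‖ ^ 2 ≤ ‖j x‖ * ‖j ((A ^ (2 * k)) x)‖ := by
    intro k x
    have h1 : ‖j ((A ^ k) x)‖ ^ 2
        = (inner ℝ (j ((A ^ k) x)) (j ((A ^ k) x)) : ℝ) := by
      rw [real_inner_self_eq_norm_sq]
    have h2 : (A ^ k) ((A ^ k) x) = (A ^ (2 * k)) x := by
      rw [two_mul, pow_add]; rfl
    rw [h1, hpow k x ((A ^ k) x), h2]
    exact real_inner_le_norm _ _
  intro x n hn
  induction n, hn using Nat.le_induction with
  | base =>
    have := key 1 x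
    simpa [pow_one] using this.trans_eq (mul_comm _ _)
  | succ n hn ih =>
    have hA2 : (2 : ℕ) ^ (n + 1) = 2 * 2 ^ n := by ring
    have hnn1 : (0 : ℝ) ≤ ‖j (A x)‖ ^ 2 ^ n := by positivity
    have step1 : (‖j (A x)‖ ^ 2 ^ n) ^ 2
        ≤ (‖j ((A ^ (2 ^ n)) x)‖ * ‖j x‖ ^ (2 ^ n - 1)) ^ 2 := by
      apply pow_le_pow_left₀ hnn1 ih
    have step2 : (‖j ((A ^ (2 ^ n)) x)‖ * ‖j x‖ ^ (2 ^ n - 1)) ^ 2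
        ≤ (‖j x‖ * ‖j ((A ^ (2 ^ (n + 1))) x)‖) * (‖j x‖ ^ (2 ^ n - 1)) ^ 2 := by
      rw [mul_pow]
      apply mul_le_mul_of_nonneg_right _ (by positivity)
      calc ‖j ((A ^ (2 ^ n)) x)‖ ^ 2 ≤ ‖j x‖ * ‖j ((A ^ (2 * 2 ^ n)) x)‖ := key _ x
        _ = ‖j x‖ * ‖j ((A ^ (2 ^ (n + 1))) x)‖ := by rw [← hA2]
    have hlhs : ‖j (A x)‖ ^ 2 ^ (n + 1) = (‖j (A x)‖ ^ 2 ^ n) ^ 2 := by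
      rw [← pow_mul, hA2, mul_comm]
    have hrhs : (‖j x‖ * ‖j ((A ^ (2 ^ (n + 1))) x)‖) * (‖j x‖ ^ (2 ^ n - 1)) ^ 2
        = ‖j ((A ^ (2 ^ (n + 1))) x)‖ * ‖j x‖ ^ (2 ^ (n + 1) - 1) := by
      have h2n : (1 : ℕ) ≤ 2 ^ n := Nat.one_le_two_pow
      have hexp : (2 ^ n - 1) * 2 + 1 = 2 ^ (n + 1) - 1 := by
        rw [pow_succ]; omega
      rw [← pow_mul, mul_assoc, mul_comm ‖j x‖, mul_assoc, ← pow_succ, hexp]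
    rw [hlhs, ← hrhs]
    exact step1.trans step2
end

section
/- Let H be a Hilbert space and A a symmetric linear operator defined on a dense A-invariant subspace D, such that for some constant C, ‖Aⁿ x‖_H ≤ Cⁿ M(x) for all n and all x ∈ D (where M(x) depends only on x). Then ‖Ax‖_H ≤ C ‖x‖_H for all x ∈ D; consequently A extends to a bounded operator on H of norm at most C. -/
/-- a symmetric operator on a dense invariant subspace whose powers
satisfy ‖Aⁿx‖ ≤ Cⁿ M(x) is bounded by C, and extends to a bounded operator on H
of norm at most C. -/
theorem symmetric_power_bound_extension
    (H : Type*) [NormedAddCommGroup H] [InnerProductSpace ℝ H] [CompleteSpace H]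
    (D : Submodule ℝ H) (hD : Dense (D : Set H))
    (A : D →ₗ[ℝ] D)
    (hsym : ∀ x y : D, (inner ℝ ((A x : H)) ((y : H)) : ℝ) = (inner ℝ ((x : H)) ((A y : H)) : ℝ))
    (C : ℝ) (hC : 0 ≤ C) (M : D → ℝ)
    (hpow : ∀ (n : ℕ) (x : D), ‖((A ^ n) x : H)‖ ≤ C ^ n * M x) :
    (∀ x : D, ‖(A x : H)‖ ≤ C * ‖(x : H)‖) ∧
    ∃ Abar : H →L[ℝ] H, (∀ x : D, Abar (x : H) = (A x : H)) ∧ ‖Abar‖ ≤ C := by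
  -- symmetry of powers
  have hsymp : ∀ (n : ℕ) (x y : D),
      (inner ℝ (((A ^ n) x : D) : H) ((y : H)) : ℝ) = inner ℝ ((x : H)) (((A ^ n) y : D) : H) := by
    intro n
    induction n with
    | zero => intro x y; simp
    | succ n ih =>
      intro x y
      calc (inner ℝ (((A ^ (n + 1)) x : D) : H) ((y : H)) : ℝ)
          = inner ℝ (((A ^ n) (A x) : D) : H) ((y : H)) := by
            rw [pow_succ, Module.End.mul_apply]
        _ = inner ℝ ((A x : H)) (((A ^ n) y : D) : H) := ih (A x) y
        _ = inner ℝ ((x : H)) ((A ((A ^ n) y) : D) : H) := hsym _ _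
        _ = inner ℝ ((x : H)) (((A ^ (n + 1)) y : D) : H) := by
            rw [pow_succ', Module.End.mul_apply]
  -- squaring inequality
  have hsq : ∀ (m : ℕ) (x : D), ‖((A ^ m) x : H)‖ ^ 2 ≤ ‖(x : H)‖ * ‖((A ^ (2 * m)) x : H)‖ := by
    intro m x
    have h1 : ‖((A ^ m) x : H)‖ ^ 2 = (inner ℝ ((x : H)) (((A ^ (2 * m)) x : H)) : ℝ) := by
      rw [← real_inner_self_eq_norm_sq, hsymp m]
      congr 2
      rw [two_mul, pow_add, Module.End.mul_apply]
    rw [h1]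
    exact real_inner_le_norm _ _
  -- key power inequality
  have key : ∀ (n : ℕ) (x : D),
      ‖(A x : H)‖ ^ (2 ^ n) ≤ ‖((A ^ (2 ^ n)) x : H)‖ * ‖(x : H)‖ ^ (2 ^ n - 1) := by
    intro n
    induction n with
    | zero => intro x; simp
    | succ n ih =>
      intro x
      have h2n : 1 ≤ 2 ^ n := Nat.one_le_two_pow
      have hexp : 2 * (2 ^ n - 1) + 1 = 2 ^ (n + 1) - 1 := by
        rw [pow_succ]; omega
      calc ‖(A x : H)‖ ^ (2 ^ (n + 1)) = (‖(A x : H)‖ ^ (2 ^ n)) ^ 2 := by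
            rw [← pow_mul, pow_succ]
        _ ≤ (‖((A ^ (2 ^ n)) x : H)‖ * ‖(x : H)‖ ^ (2 ^ n - 1)) ^ 2 :=
            pow_le_pow_left₀ (pow_nonneg (norm_nonneg _) _) (ih x) 2
        _ = ‖((A ^ (2 ^ n)) x : H)‖ ^ 2 * ‖(x : H)‖ ^ (2 * (2 ^ n - 1)) := by
            rw [mul_pow, ← pow_mul, mul_comm (2 ^ n - 1) 2]
        _ ≤ (‖(x : H)‖ * ‖((A ^ (2 * 2 ^ n)) x : H)‖) * ‖(x : H)‖ ^ (2 * (2 ^ n - 1)) :=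
            mul_le_mul_of_nonneg_right (hsq _ x) (pow_nonneg (norm_nonneg _) _)
        _ = ‖((A ^ (2 ^ (n + 1))) x : H)‖ * ‖(x : H)‖ ^ (2 ^ (n + 1) - 1) := by
            rw [← hexp, pow_succ, mul_comm (2 ^ n) 2, pow_succ]
            ring
  -- main bound
  have hb : ∀ x : D, ‖(A x : H)‖ ≤ C * ‖(x : H)‖ := by
    intro x
    by_cases hx0 : (x : H) = 0
    · have : x = 0 := by exact_mod_cast hx0
      simp [this]
    rcases eq_or_lt_of_le hC with hC0 | hCpos
    · have h1 := hpow 1 x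
      rw [pow_one, ← hC0] at h1
      simp only [pow_one, zero_mul] at h1
      have : ‖(A x : H)‖ ≤ 0 := by simpa [← hC0] using h1
      have := norm_nonneg (A x : H)
      nlinarith [norm_nonneg (x : H)]
    · -- C > 0, x ≠ 0
      have hxpos : 0 < ‖(x : H)‖ := norm_pos_iff.mpr hx0
      have hM : ‖(x : H)‖ ≤ M x := by simpa using hpow 0 x
      by_contra hcon
      push_neg at hcon
      set q : ℝ := ‖(A x : H)‖ / (C * ‖(x : H)‖) with hq
      have hCx : 0 < C * ‖(x : H)‖ := mul_pos hCpos hxpos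
      have hq1 : 1 < q := (one_lt_div hCx).mpr hcon
      have key2 : ∀ n : ℕ, q ^ n ≤ M x / ‖(x : H)‖ := by
        intro n
        have hle : q ^ n ≤ q ^ (2 ^ n) :=
          pow_le_pow_right₀ hq1.le (Nat.lt_two_pow_self (n := n)).le
        refine hle.trans ?_
        rw [hq, div_pow, div_le_div_iff₀ (pow_pos hCx _) hxpos]
        have h1 : 2 ^ n - 1 + 1 = 2 ^ n := Nat.succ_pred_eq_of_pos (pow_pos (by norm_num) n)
        calc ‖(A x : H)‖ ^ 2 ^ n * ‖(x : H)‖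
            ≤ (‖((A ^ (2 ^ n)) x : H)‖ * ‖(x : H)‖ ^ (2 ^ n - 1)) * ‖(x : H)‖ :=
              mul_le_mul_of_nonneg_right (key n x) (norm_nonneg _)
          _ ≤ ((C ^ (2 ^ n) * M x) * ‖(x : H)‖ ^ (2 ^ n - 1)) * ‖(x : H)‖ :=
              mul_le_mul_of_nonneg_right (mul_le_mul_of_nonneg_right (hpow _ x)
                (pow_nonneg (norm_nonneg _) _)) (norm_nonneg _)
          _ = C ^ (2 ^ n) * M x * ‖(x : H)‖ ^ (2 ^ n) := by
              rw [mul_assoc, ← pow_succ, h1]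
          _ = M x * (C * ‖(x : H)‖) ^ (2 ^ n) := by rw [mul_pow]; ring
      obtain ⟨n, hn⟩ :=
        ((tendsto_pow_atTop_atTop_of_one_lt hq1).eventually_gt_atTop (M x / ‖(x : H)‖)).exists
      exact absurd (key2 n) (not_le.mpr hn)
  refine ⟨hb, ?_⟩
  -- the continuous linear map D →L H
  let f : D →L[ℝ] H := LinearMap.mkContinuous (D.subtype ∘ₗ A) C (fun x => by
    simpa using hb x)
  let e : D →L[ℝ] H := D.subtypeL
  have hde : DenseRange e := hD.denseRange_val
  have he : ∀ x : D, ‖x‖ ≤ ((1 : NNReal) : ℝ) * ‖e x‖ := by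
    intro x; simp [e]
  refine ⟨f.extend e,
    ?_, ?_⟩
  · intro x
    have : e x = (x : H) := rfl
    rw [← this, ContinuousLinearMap.extend_eq (h_dense := hde)
      (h_e := (ContinuousLinearMap.isUniformEmbedding_of_bound e he).isUniformInducing)]
    rfl
  · have h1 := ContinuousLinearMap.opNorm_extend_le f hde he
    have h2 : ‖f‖ ≤ C := LinearMap.mkContinuous_norm_le _ hC _
    simpa using h1.trans (by simpa using h2)
end

section
/- Every infinite-dimensional separable Banach space B admits a triple H₁ ⊆ B ⊆ H₂ where H₁ and H₂ are separable Hilbert spaces and both inclusions are continuous dense embeddings. -/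
open TopologicalSpace Set
open scoped ENNReal

noncomputable section GKaux

namespace GKaux

abbrev E2 : Type := lp (fun _ : ℕ => ℝ) 2

theorem E2_sep : SeparableSpace E2 := by
  rw [← isSeparable_univ_iff]
  have hs : IsSeparable (Set.range (fun n : ℕ => lp.single 2 n (1:ℝ)) : Set E2) :=
    (Set.countable_range _).isSeparable
  have hspan := hs.span (R := ℝ)
  refine (hspan.closure).mono ?_
  intro f _
  have hsum := lp.hasSum_single (p := 2) (E := fun _ : ℕ => ℝ) (by norm_num) f
  refine mem_closure_of_tendsto hsum.tendsto_sum_nat (Filter.Eventually.of_forall fun n => ?_)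
  refine Submodule.sum_mem _ fun i _ => ?_
  have : (lp.single 2 i (f i) : E2) = (f i : ℝ) • (lp.single 2 i (1:ℝ) : E2) := by
    have h := lp.single_smul (E := fun _ : ℕ => ℝ) 2 i (f i) (1:ℝ)
    rw [smul_eq_mul, mul_one] at h
    exact h
  rw [this]
  exact Submodule.smul_mem _ _ (Submodule.subset_span (Set.mem_range_self i))

instance : SeparableSpace E2 := E2_sep
instance : SecondCountableTopology E2 := UniformSpace.secondCountable_of_separable E2

variable {B : Type*} [NormedAddCommGroup B] [NormedSpace ℝ B] [CompleteSpace B]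

lemma summable_w : Summable (fun n : ℕ => (2:ℝ)⁻¹ ^ n) :=
  summable_geometric_of_lt_one (by norm_num) (by norm_num)

lemma summable_T (b : ℕ → B) (hb : ∀ n, ‖b n‖ ≤ 1) (a : E2) :
    Summable (fun n => ((2:ℝ)⁻¹ ^ n * a n) • b n) := by
  refine Summable.of_norm_bounded (g := fun n => ‖a‖ * (2:ℝ)⁻¹ ^ n)
    (summable_w.mul_left ‖a‖) fun n => ?_
  rw [norm_smul, norm_mul]
  calc ‖(2:ℝ)⁻¹ ^ n‖ * ‖(a n : ℝ)‖ * ‖b n‖ ≤ (2:ℝ)⁻¹ ^ n * ‖a‖ * 1 := by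
        refine mul_le_mul (mul_le_mul ?_ ?_ (norm_nonneg _) (by positivity)) (hb n)
          (norm_nonneg _) (by positivity)
        · rw [Real.norm_eq_abs, abs_of_nonneg (by positivity)]
        · exact lp.norm_apply_le_norm (by norm_num) a n
    _ = ‖a‖ * (2:ℝ)⁻¹ ^ n := by ring

/-- The map `ℓ² → B`. -/
def Tmap (b : ℕ → B) (hb : ∀ n, ‖b n‖ ≤ 1) : E2 →L[ℝ] B :=
  LinearMap.mkContinuous
    { toFun := fun a => ∑' n, ((2:ℝ)⁻¹ ^ n * a n) • b n
      map_add' := by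
        intro a a'
        show (∑' n, ((2:ℝ)⁻¹ ^ n * ((a + a' : E2) n : ℝ)) • b n) = _
        have h1 : ∀ n : ℕ, ((2:ℝ)⁻¹ ^ n * ((a + a' : E2) n : ℝ)) • b n
            = ((2:ℝ)⁻¹ ^ n * (a n : ℝ)) • b n + ((2:ℝ)⁻¹ ^ n * (a' n : ℝ)) • b n := fun n => by
          have : ((a + a' : E2) n : ℝ) = a n + a' n := rfl
          rw [this, mul_add, add_smul]
        rw [tsum_congr h1, Summable.tsum_add (summable_T b hb a) (summable_T b hb a')]
      map_smul' := by
        intro c a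
        show (∑' n, ((2:ℝ)⁻¹ ^ n * ((c • a : E2) n : ℝ)) • b n) = _
        have h1 : ∀ n : ℕ, ((2:ℝ)⁻¹ ^ n * ((c • a : E2) n : ℝ)) • b n
            = c • (((2:ℝ)⁻¹ ^ n * (a n : ℝ)) • b n) := fun n => by
          have : ((c • a : E2) n : ℝ) = c * a n := rfl
          rw [this, smul_smul]
          ring_nf
        rw [tsum_congr h1, Summable.tsum_const_smul c (summable_T b hb a)]
        rfl }
    2
    (by
      intro a
      simp only [LinearMap.coe_mk, AddHom.coe_mk]
      calc ‖∑' n, ((2:ℝ)⁻¹ ^ n * a n) • b n‖ ≤ ∑' n, ‖a‖ * (2:ℝ)⁻¹ ^ n := by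
            refine tsum_of_norm_bounded ((summable_w.mul_left ‖a‖).hasSum) fun n => ?_
            rw [norm_smul, norm_mul]
            calc ‖(2:ℝ)⁻¹ ^ n‖ * ‖(a n : ℝ)‖ * ‖b n‖ ≤ (2:ℝ)⁻¹ ^ n * ‖a‖ * 1 := by
                  refine mul_le_mul (mul_le_mul ?_ ?_ (norm_nonneg _) (by positivity)) (hb n)
                    (norm_nonneg _) (by positivity)
                  · rw [Real.norm_eq_abs, abs_of_nonneg (by positivity)]
                  · exact lp.norm_apply_le_norm (by norm_num) a n
              _ = ‖a‖ * (2:ℝ)⁻¹ ^ n := by ring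
        _ = ‖a‖ * ∑' n, (2:ℝ)⁻¹ ^ n := tsum_mul_left
        _ = ‖a‖ * 2 := by
            rw [tsum_geometric_of_lt_one (by norm_num) (by norm_num)]; norm_num
        _ = 2 * ‖a‖ := by ring)

lemma Tmap_single (b : ℕ → B) (hb : ∀ n, ‖b n‖ ≤ 1) (n : ℕ) :
    Tmap b hb (lp.single 2 n (1:ℝ)) = (2:ℝ)⁻¹ ^ n • b n := by
  have : Tmap b hb (lp.single 2 n (1:ℝ)) =
      ∑' m, ((2:ℝ)⁻¹ ^ m * ((lp.single 2 n (1:ℝ) : E2) m : ℝ)) • b m := rfl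
  rw [this]
  rw [tsum_eq_single n]
  · rw [lp.single_apply_self, mul_one]
  · intro m hm
    rw [lp.single_apply_ne 2 n _ hm, mul_zero, zero_smul]


lemma Tmap_b_mem_range (b : ℕ → B) (hb : ∀ n, ‖b n‖ ≤ 1) (n : ℕ) :
    b n ∈ Set.range (Tmap b hb) := by
  refine ⟨(2:ℝ) ^ n • lp.single 2 n 1, ?_⟩
  rw [map_smul, Tmap_single, smul_smul]
  rw [show (2:ℝ) ^ n * (2:ℝ)⁻¹ ^ n = 1 by
    rw [← mul_pow]; norm_num]
  rw [one_smul]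

lemma denseRange_Tmap (b : ℕ → B) (hb : ∀ n, ‖b n‖ ≤ 1)
    (hd : Dense ((Submodule.span ℝ (Set.range b) : Submodule ℝ B) : Set B)) :
    DenseRange (Tmap b hb) := by
  have h1 : ((Submodule.span ℝ (Set.range b) : Submodule ℝ B) : Set B)
      ⊆ Set.range (Tmap b hb) := by
    have hle : Submodule.span ℝ (Set.range b) ≤ LinearMap.range ((Tmap b hb) : E2 →ₗ[ℝ] B) := by
      rw [Submodule.span_le]
      rintro x ⟨n, rfl⟩
      exact Tmap_b_mem_range b hb n
    intro x hx
    exact hle hx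
  exact Dense.mono h1 hd

lemma exists_b [SeparableSpace B] :
    ∃ b : ℕ → B, (∀ n, ‖b n‖ ≤ 1) ∧
      Dense ((Submodule.span ℝ (Set.range b) : Submodule ℝ B) : Set B) := by
  have : Nonempty B := ⟨0⟩
  obtain ⟨d, hd⟩ := exists_dense_seq B
  refine ⟨fun n => (max 1 ‖d n‖)⁻¹ • d n, fun n => ?_, ?_⟩
  · have h1 : (0:ℝ) < max 1 ‖d n‖ := lt_of_lt_of_le one_pos (le_max_left _ _)
    rw [norm_smul, Real.norm_eq_abs, abs_of_nonneg (by positivity)]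
    rw [inv_mul_le_one₀ h1]
    · exact le_max_right _ _
  · have h2 : Set.range d ⊆
        ((Submodule.span ℝ (Set.range fun n => (max 1 ‖d n‖)⁻¹ • d n) : Submodule ℝ B) : Set B) := by
      rintro x ⟨n, rfl⟩
      have h1 : (0:ℝ) < max 1 ‖d n‖ := lt_of_lt_of_le one_pos (le_max_left _ _)
      have : d n = (max 1 ‖d n‖) • ((max 1 ‖d n‖)⁻¹ • d n) := by
        rw [smul_smul, mul_inv_cancel₀ h1.ne', one_smul]
      rw [this]
      exact Submodule.smul_mem _ _ (Submodule.subset_span (Set.mem_range_self n))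
    exact Dense.mono h2 hd

lemma exists_sep_functionals [SeparableSpace B] :
    ∃ f : ℕ → (B →L[ℝ] ℝ), (∀ n, ‖f n‖ ≤ 1) ∧ ∀ x : B, x ≠ 0 → ∃ n, f n x ≠ 0 := by
  have : Nonempty B := ⟨0⟩
  obtain ⟨d, hd⟩ := exists_dense_seq B
  have F : ∀ n : ℕ, ∃ g : B →L[ℝ] ℝ, ‖g‖ ≤ 1 ∧ (d n ≠ 0 → g (d n) = ‖d n‖) := by
    intro n
    by_cases h : d n = 0
    · exact ⟨0, by simp, fun h' => absurd h h'⟩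
    · obtain ⟨g, hg1, hg2⟩ := exists_dual_vector ℝ (d n) (norm_ne_zero_iff.mpr h)
      exact ⟨g, le_of_eq hg1, fun _ => hg2⟩
  choose f hf1 hf2 using F
  refine ⟨f, hf1, fun x hx => ?_⟩
  have hxpos : (0:ℝ) < ‖x‖ := norm_pos_iff.mpr hx
  have hx3 : (0:ℝ) < ‖x‖ / 3 := by positivity
  obtain ⟨n, hn⟩ := Metric.denseRange_iff.mp hd x (‖x‖/3) hx3
  rw [dist_eq_norm] at hn
  have hdn : ‖x‖ - ‖x‖/3 ≤ ‖d n‖ := by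
    have := norm_sub_norm_le x (d n)
    linarith
  have hdn0 : d n ≠ 0 := by
    intro h
    rw [h, norm_zero] at hdn
    have : (0:ℝ) < ‖x‖ := norm_pos_iff.mpr hx
    linarith
  have hfd := hf2 n hdn0
  have hbound : |f n (d n - x)| ≤ ‖x - d n‖ := by
    calc |f n (d n - x)| ≤ ‖f n‖ * ‖d n - x‖ := (f n).le_opNorm _
      _ ≤ 1 * ‖d n - x‖ := by
          exact mul_le_mul_of_nonneg_right (hf1 n) (norm_nonneg _)
      _ = ‖x - d n‖ := by rw [one_mul, norm_sub_rev]
  refine ⟨n, fun h0 => ?_⟩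
  have heq : f n (d n - x) = ‖d n‖ := by
    rw [map_sub, hfd, h0, sub_zero]
  rw [heq] at hbound
  have : (0:ℝ) < ‖x‖ := norm_pos_iff.mpr hx
  have habs : ‖d n‖ ≤ ‖x - d n‖ := le_trans (le_abs_self _) hbound
  linarith


lemma rpow_toReal_two (t : ℝ) : t ^ ((2:ℝ≥0∞)).toReal = t ^ (2:ℕ) := by
  rw [show ((2:ℝ≥0∞)).toReal = ((2:ℕ):ℝ) by norm_num]
  exact Real.rpow_natCast t 2

lemma summable_S (f : ℕ → (B →L[ℝ] ℝ)) (hf : ∀ n, ‖f n‖ ≤ 1) (x : B) :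
    Summable (fun n : ℕ => ‖(2:ℝ)⁻¹ ^ n * f n x‖ ^ (2:ℕ)) := by
  refine Summable.of_nonneg_of_le (fun n => by positivity)
    (fun n => ?_) ((summable_geometric_of_lt_one (by norm_num) (by norm_num :
      (4:ℝ)⁻¹ < 1)).mul_left (‖x‖^(2:ℕ)))
  have h1 : |f n x| ≤ ‖x‖ := by
    calc |f n x| ≤ ‖f n‖ * ‖x‖ := (f n).le_opNorm x
      _ ≤ 1 * ‖x‖ := mul_le_mul_of_nonneg_right (hf n) (norm_nonneg _)
      _ = ‖x‖ := one_mul _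
  rw [norm_mul, mul_pow, Real.norm_eq_abs, Real.norm_eq_abs,
    abs_of_nonneg (by positivity : (0:ℝ) ≤ (2:ℝ)⁻¹ ^ n)]
  have h2 : ((2:ℝ)⁻¹ ^ n) ^ (2:ℕ) = (4:ℝ)⁻¹ ^ n := by
    rw [← pow_mul, pow_mul']
    norm_num
  rw [h2]
  calc (4:ℝ)⁻¹ ^ n * |f n x| ^ 2 ≤ (4:ℝ)⁻¹ ^ n * ‖x‖ ^ 2 := by
        refine mul_le_mul_of_nonneg_left ?_ (by positivity)
        exact pow_le_pow_left₀ (abs_nonneg _) h1 2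
    _ = ‖x‖ ^ 2 * (4:ℝ)⁻¹ ^ n := by ring

lemma memℓp_S (f : ℕ → (B →L[ℝ] ℝ)) (hf : ∀ n, ‖f n‖ ≤ 1) (x : B) :
    Memℓp (fun n : ℕ => (2:ℝ)⁻¹ ^ n * f n x) 2 := by
  apply memℓp_gen
  have : (fun n : ℕ => ‖(2:ℝ)⁻¹ ^ n * f n x‖ ^ ((2:ℝ≥0∞)).toReal)
      = fun n : ℕ => ‖(2:ℝ)⁻¹ ^ n * f n x‖ ^ (2:ℕ) := by
    funext n; exact rpow_toReal_two _
  rw [this]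
  exact summable_S f hf x

/-- The map `B → ℓ²`. -/
def Smap (f : ℕ → (B →L[ℝ] ℝ)) (hf : ∀ n, ‖f n‖ ≤ 1) : B →L[ℝ] E2 :=
  LinearMap.mkContinuous
    { toFun := fun x => (⟨fun n => (2:ℝ)⁻¹ ^ n * f n x, memℓp_S f hf x⟩ : E2)
      map_add' := by
        intro x y
        apply lp.ext
        funext n
        show (2:ℝ)⁻¹ ^ n * f n (x + y) = (2:ℝ)⁻¹ ^ n * f n x + (2:ℝ)⁻¹ ^ n * f n y
        rw [map_add, mul_add]
      map_smul' := by
        intro c x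
        apply lp.ext
        funext n
        show (2:ℝ)⁻¹ ^ n * f n (c • x) = c * ((2:ℝ)⁻¹ ^ n * f n x)
        rw [map_smul, smul_eq_mul]
        ring }
    2
    (by
      intro x
      simp only [LinearMap.coe_mk, AddHom.coe_mk]
      set v : E2 := (⟨fun n => (2:ℝ)⁻¹ ^ n * f n x, memℓp_S f hf x⟩ : E2) with hv
      have hvn : ∀ n : ℕ, (v n : ℝ) = (2:ℝ)⁻¹ ^ n * f n x := fun n => rfl
      have h0 : (0:ℝ) < ((2:ℝ≥0∞)).toReal := by norm_num
      have hsq : ‖v‖ ^ (2:ℕ) ≤ (2 * ‖x‖) ^ (2:ℕ) := by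
        have h1 : ‖v‖ ^ ((2:ℝ≥0∞)).toReal = ∑' n, ‖(v n : ℝ)‖ ^ ((2:ℝ≥0∞)).toReal :=
          lp.norm_rpow_eq_tsum h0 v
        rw [rpow_toReal_two] at h1
        have h2 : (fun n : ℕ => ‖(v n : ℝ)‖ ^ ((2:ℝ≥0∞)).toReal)
            = fun n : ℕ => ‖(2:ℝ)⁻¹ ^ n * f n x‖ ^ (2:ℕ) := by
          funext n; rw [rpow_toReal_two, hvn]
        rw [h2] at h1
        rw [h1]
        have hle : ∑' n : ℕ, ‖(2:ℝ)⁻¹ ^ n * f n x‖ ^ (2:ℕ)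
            ≤ ∑' n : ℕ, ‖x‖^(2:ℕ) * (4:ℝ)⁻¹ ^ n := by
          refine (summable_S f hf x).tsum_le_tsum (fun n => ?_)
            ((summable_geometric_of_lt_one (by norm_num) (by norm_num)).mul_left _)
          have h1 : |f n x| ≤ ‖x‖ := by
            calc |f n x| ≤ ‖f n‖ * ‖x‖ := (f n).le_opNorm x
              _ ≤ 1 * ‖x‖ := mul_le_mul_of_nonneg_right (hf n) (norm_nonneg _)
              _ = ‖x‖ := one_mul _
          rw [norm_mul, mul_pow, Real.norm_eq_abs, Real.norm_eq_abs,
            abs_of_nonneg (by positivity : (0:ℝ) ≤ (2:ℝ)⁻¹ ^ n)]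
          have h2 : ((2:ℝ)⁻¹ ^ n) ^ (2:ℕ) = (4:ℝ)⁻¹ ^ n := by
            rw [← pow_mul, pow_mul']; norm_num
          rw [h2]
          calc (4:ℝ)⁻¹ ^ n * |f n x| ^ 2 ≤ (4:ℝ)⁻¹ ^ n * ‖x‖ ^ 2 := by
                refine mul_le_mul_of_nonneg_left ?_ (by positivity)
                exact pow_le_pow_left₀ (abs_nonneg _) h1 2
            _ = ‖x‖ ^ 2 * (4:ℝ)⁻¹ ^ n := by ring
        refine hle.trans ?_
        rw [tsum_mul_left, tsum_geometric_of_lt_one (by norm_num) (by norm_num)]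
        nlinarith [norm_nonneg x, sq_nonneg ‖x‖]
      nlinarith [lp.norm_nonneg' v, norm_nonneg x])

lemma Smap_injective (f : ℕ → (B →L[ℝ] ℝ)) (hf : ∀ n, ‖f n‖ ≤ 1)
    (hsep : ∀ x : B, x ≠ 0 → ∃ n, f n x ≠ 0) : Function.Injective (Smap f hf) := by
  intro x y hxy
  by_contra hne
  have hx0 : x - y ≠ 0 := sub_ne_zero_of_ne hne
  obtain ⟨n, hn⟩ := hsep _ hx0
  have h0 : Smap f hf (x - y) = 0 := by rw [map_sub, hxy, sub_self]
  have : ((Smap f hf (x - y)) n : ℝ) = (2:ℝ)⁻¹ ^ n * f n (x - y) := rfl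
  rw [h0] at this
  have hz : ((0 : E2) n : ℝ) = 0 := rfl
  rw [hz] at this
  have hpow : (2:ℝ)⁻¹ ^ n ≠ 0 := by positivity
  rcases mul_eq_zero.mp this.symm with h | h
  · exact hpow h
  · exact hn h

end GKaux
end GKaux

/-- Gross–Kuelbs rigging: every infinite-dimensional separable
Banach space B sits in a triple H₁ ⊆ B ⊆ H₂ of continuous dense embeddings,
with H₁ and H₂ separable Hilbert spaces. -/
theorem gross_kuelbs_rigging
    (B : Type*) [NormedAddCommGroup B] [NormedSpace ℝ B] [CompleteSpace B]
    [TopologicalSpace.SeparableSpace B]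
    (hinf : ¬ FiniteDimensional ℝ B) :
    ∃ (H₁ : Type) (nG₁ : NormedAddCommGroup H₁) (iP₁ : @InnerProductSpace ℝ H₁ _ nG₁.toSeminormedAddCommGroup)
      (H₂ : Type) (nG₂ : NormedAddCommGroup H₂) (iP₂ : @InnerProductSpace ℝ H₂ _ nG₂.toSeminormedAddCommGroup),
      CompleteSpace H₁ ∧ TopologicalSpace.SeparableSpace H₁ ∧
      CompleteSpace H₂ ∧ TopologicalSpace.SeparableSpace H₂ ∧
      (∃ j₁ : H₁ →L[ℝ] B, Function.Injective j₁ ∧ DenseRange j₁) ∧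
      (∃ j₂ : B →L[ℝ] H₂, Function.Injective j₂ ∧ DenseRange j₂) := by
  classical
  obtain ⟨b, hb, hbd⟩ := GKaux.exists_b (B := B)
  set T := GKaux.Tmap b hb with hT
  have hTd : DenseRange T := GKaux.denseRange_Tmap b hb hbd
  set K : Submodule ℝ GKaux.E2 := LinearMap.ker (T : GKaux.E2 →ₗ[ℝ] B) with hK
  have hKclosed : IsClosed (K : Set GKaux.E2) := ContinuousLinearMap.isClosed_ker T
  have : CompleteSpace K := hKclosed.completeSpace_coe
  have hKo_closed : IsClosed ((Kᗮ : Submodule ℝ GKaux.E2) : Set GKaux.E2) := K.isClosed_orthogonal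
  have hKo_complete : CompleteSpace (↥Kᗮ) := hKo_closed.completeSpace_coe
  obtain ⟨f, hf, hsep⟩ := GKaux.exists_sep_functionals (B := B)
  set S := GKaux.Smap f hf with hS
  set Rc : Submodule ℝ GKaux.E2 := (LinearMap.range (S : B →ₗ[ℝ] GKaux.E2)).topologicalClosure with hRc
  have hRc_closed : IsClosed ((Rc : Submodule ℝ GKaux.E2) : Set GKaux.E2) :=
    Submodule.isClosed_topologicalClosure _
  have hRc_complete : CompleteSpace (↥Rc) := hRc_closed.completeSpace_coe
  refine ⟨↥Kᗮ, inferInstance, inferInstance, ↥Rc, inferInstance, inferInstance,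
    hKo_complete, inferInstance, hRc_complete, inferInstance, ?_, ?_⟩
  · -- j₁
    refine ⟨T.comp (Submodule.subtypeL Kᗮ), ?_, ?_⟩
    · intro x y hxy
      have h1 : T ((x : GKaux.E2) - (y : GKaux.E2)) = 0 := by
        rw [map_sub, sub_eq_zero]
        exact hxy
      have hmemK : (x : GKaux.E2) - (y : GKaux.E2) ∈ K := h1
      have hmemKo : (x : GKaux.E2) - (y : GKaux.E2) ∈ Kᗮ := sub_mem x.2 y.2
      have h0 : (x : GKaux.E2) - (y : GKaux.E2) = 0 :=
        Submodule.disjoint_def.mp K.orthogonal_disjoint _ hmemK hmemKo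
      exact Subtype.ext (sub_eq_zero.mp h0)
    · have hrange : Set.range (T.comp (Submodule.subtypeL Kᗮ)) = Set.range T := by
        ext v
        constructor
        · rintro ⟨z, rfl⟩
          exact ⟨(z : GKaux.E2), rfl⟩
        · rintro ⟨u, rfl⟩
          obtain ⟨y, hy, z, hz, rfl⟩ := K.exists_add_mem_mem_orthogonal u
          refine ⟨⟨z, hz⟩, ?_⟩
          have : T (y + z) = T z := by
            rw [map_add, show T y = 0 from hy, zero_add]
          simp only [ContinuousLinearMap.comp_apply, Submodule.subtypeL_apply]
          exact this.symm
      have hd2 : Dense (Set.range (T.comp (Submodule.subtypeL Kᗮ))) := by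
        rw [hrange]; exact hTd
      exact hd2
  · -- j₂
    refine ⟨S.codRestrict Rc (fun x => Submodule.le_topologicalClosure _
      (LinearMap.mem_range_self _ x)), ?_, ?_⟩
    · intro x y hxy
      refine GKaux.Smap_injective f hf hsep ?_
      have := congrArg (Subtype.val) hxy
      exact this
    · intro y
      rw [closure_subtype]
      have h1 : (Subtype.val '' Set.range (S.codRestrict Rc (fun x =>
          Submodule.le_topologicalClosure _ (LinearMap.mem_range_self _ x))))
          = Set.range S := by
        rw [← Set.range_comp]
        rfl
      rw [h1]
      have h2 : (y : GKaux.E2) ∈ ((Rc : Submodule ℝ GKaux.E2) : Set GKaux.E2) := y.2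
      have h3 : ((Rc : Submodule ℝ GKaux.E2) : Set GKaux.E2) = closure (Set.range S) := by
        rw [hRc, Submodule.topologicalClosure_coe, LinearMap.coe_range]; rfl
      rw [h3] at h2
      exact h2
end
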